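/- Let G = (V,E) be a graph with maximum degree at most Δ, fix q ≥ 2, and for each edge uv let A^{uv} ∈ ℂ^{q×q}. Suppose 0 < θ < 2π/3, τ = cos(θ/2), and δ = (θτ/(2Δ))/(1 + θτ/(2Δ)) so that θ = 2δΔ/(τ(1−δ)). If |A^{uv}(j,k) − 1| < δ for all edges uv and all j,k ∈ [q], then for every S ⊆ V and every map φ: S → [q], the partial partition function Z = ∑_{σ: V→[q], σ|_S = φ} ∏_{uv∈E} A^{uv}(σ(u),σ(v)) is nonzero. -/

import Mathlib

open Finset

set_option maxHeartbeats 1600000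

namespace Stmt16


lemma int_zero_of_abs_lt {k : ℤ} (h : |2 * Real.pi * (k:ℝ)| < 2 * Real.pi) : k = 0 := by
  have hπ := Real.pi_pos
  by_contra hk
  have h1 : (1:ℝ) ≤ |(k:ℝ)| := by
    have := Int.one_le_abs hk
    exact_mod_cast this
  rw [abs_mul, abs_of_pos (by linarith : (0:ℝ) < 2 * Real.pi)] at h
  nlinarith

lemma arg_eq_of_angle_eq {z : ℂ} {t : ℝ} (h : (z.arg : Real.Angle) = (t : Real.Angle))
    (ht : |t| < Real.pi) : z.arg = t := by
  obtain ⟨k, hk⟩ := Real.Angle.angle_eq_iff_two_pi_dvd_sub.mp h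
  have h1 : |z.arg| ≤ Real.pi := Complex.abs_arg_le_pi z
  have hk0 : k = 0 := by
    apply int_zero_of_abs_lt
    rw [← hk]
    calc |z.arg - t| ≤ |z.arg| + |t| := abs_sub _ _
      _ < 2 * Real.pi := by nlinarith
  rw [hk0] at hk
  push_cast at hk
  linarith [hk]

lemma arg_mul_eq {x y : ℂ} (hx : x ≠ 0) (hy : y ≠ 0)
    (h : |x.arg| + |y.arg| < Real.pi) : (x * y).arg = x.arg + y.arg := by
  apply arg_eq_of_angle_eq
  · rw [Complex.arg_mul_coe_angle hx hy, Real.Angle.coe_add]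
  · calc |x.arg + y.arg| ≤ |x.arg| + |y.arg| := abs_add_le _ _
      _ < Real.pi := h

lemma arg_div_eq {x y : ℂ} (hx : x ≠ 0) (hy : y ≠ 0)
    (h : |x.arg| + |y.arg| < Real.pi) : (x / y).arg = x.arg - y.arg := by
  apply arg_eq_of_angle_eq
  · rw [Complex.arg_div_coe_angle hx hy, Real.Angle.coe_sub]
  · calc |x.arg - y.arg| ≤ |x.arg| + |y.arg| := abs_sub _ _
      _ < Real.pi := h

lemma arg_div_le {x y : ℂ} (hx : x ≠ 0) (hy : y ≠ 0)
    (h : |x.arg| + |y.arg| < Real.pi) : |(x / y).arg| ≤ |x.arg| + |y.arg| := by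
  rw [arg_div_eq hx hy h]
  exact abs_sub _ _



/-- If `|z - 1| ≤ r ≤ 3/4`, then `z ≠ 0` and `|arg z| ≤ r / (1 - (4/9) r²)`. -/
lemma arg_near_one {z : ℂ} {r : ℝ} (hz : ‖z - 1‖ ≤ r) (hr : r ≤ 3/4) :
    z ≠ 0 ∧ |z.arg| ≤ r / (1 - (4/9) * r^2) := by
  have hr0 : (0:ℝ) ≤ r := le_trans (norm_nonneg _) hz
  have hden : (0:ℝ) < 1 - (4/9) * r^2 := by nlinarith
  have hre : 1 - r ≤ z.re := by
    have h1 : |z.re - 1| ≤ r := by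
      have h2 := Complex.abs_re_le_norm (z - 1)
      simp only [Complex.sub_re, Complex.one_re] at h2
      exact h2.trans hz
    linarith [(abs_le.mp h1).1]
  have hrepos : 0 < z.re := by linarith
  have hz0 : z ≠ 0 := by
    intro h; rw [h] at hrepos; simp at hrepos
  refine ⟨hz0, ?_⟩
  have habs : (0:ℝ) < ‖z‖ := by
    have := Complex.abs_re_le_norm z
    calc (0:ℝ) < z.re := hrepos
      _ ≤ |z.re| := le_abs_self _
      _ ≤ ‖z‖ := this
  have hsq : (z.re - 1)^2 + z.im^2 ≤ r^2 := by
    have h1 : (‖z-1‖)^2 ≤ r^2 := by nlinarith [norm_nonneg (z-1)]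
    rw [Complex.sq_norm, Complex.normSq_apply] at h1
    simp only [Complex.sub_re, Complex.sub_im, Complex.one_re, Complex.one_im, sub_zero] at h1
    nlinarith [h1]
  have him2 : z.im^2 ≤ r^2 * (‖z‖)^2 := by
    have hzsq : (‖z‖)^2 = z.re^2 + z.im^2 := by
      rw [Complex.sq_norm, Complex.normSq_apply]; ring
    nlinarith [mul_le_mul_of_nonneg_left hsq (by nlinarith : (0:ℝ) ≤ 1 - r^2),
      sq_nonneg (r^2 + (z.re - 1))]
  have him : |z.im| ≤ r * ‖z‖ := by
    have h3 : (0:ℝ) ≤ r * ‖z‖ := mul_nonneg hr0 (le_of_lt habs)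
    nlinarith [abs_nonneg z.im, sq_abs z.im]
  have hsin : |Real.sin z.arg| ≤ r := by
    rw [Complex.sin_arg, abs_div, abs_of_pos habs, div_le_iff₀ habs]
    exact him
  set t := |z.arg| with ht
  have ht0 : 0 ≤ t := abs_nonneg _
  have htpi : t < Real.pi / 2 := Complex.abs_arg_lt_pi_div_two_iff.mpr (Or.inl hrepos)
  have hsint : Real.sin t ≤ r := by
    rcases abs_cases z.arg with ⟨he, _⟩ | ⟨he, _⟩
    · rw [ht, he]; exact (le_abs_self _).trans hsin
    · rw [ht, he, Real.sin_neg]; exact (neg_le_abs _).trans hsin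
  have hπ := Real.pi_gt_three
  have ht1 : t < 1 := by
    by_contra hc
    push_neg at hc
    have hmem1 : (1:ℝ) ∈ Set.Icc (-(Real.pi/2)) (Real.pi/2) := by
      constructor <;> nlinarith
    have hmemt : t ∈ Set.Icc (-(Real.pi/2)) (Real.pi/2) := by
      constructor <;> nlinarith
    have hmono := Real.strictMonoOn_sin.monotoneOn hmem1 hmemt hc
    have hs1 : (3:ℝ)/4 < Real.sin 1 := by
      have := Real.sin_gt_sub_cube one_pos
      norm_num at this
      linarith
    linarith
  rcases eq_or_lt_of_le ht0 with h0 | h0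
  · rw [← h0]; positivity
  · have hcube : t - t^3/4 < Real.sin t := by
        have := Real.sin_gt_sub_cube h0; nlinarith [pow_pos h0 3]
    have ha : t - t^3/4 ≤ r := le_of_lt (lt_of_lt_of_le hcube hsint)
    have htt : t^2 < 1 := by nlinarith
    have ht3 : t^3 < t := by nlinarith [mul_pos h0 (show (0:ℝ) < 1 - t^2 by linarith [htt])]
    have hb : t ≤ 4/3 * r := by linarith
    have htsq : t^2 ≤ (4/3*r)^2 := by nlinarith [hb, ht0]
    have hfin : t^3/4 ≤ (4/9)*r^2*t := by nlinarith [mul_le_mul_of_nonneg_left htsq ht0]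
    rw [le_div_iff₀ hden]
    nlinarith [ha, hfin]

/-- Concentration lemma: if nonzero complex numbers pairwise make an angle at
most `θ < 2π/3`, then the modulus of their sum is at least `cos (θ/2)` times
the sum of the moduli. -/
lemma tau_lemma {q : ℕ} (hq : 0 < q) {θ : ℝ} (hθ0 : 0 ≤ θ) (hθ1 : θ < 2 * Real.pi / 3)
    (X : Fin q → ℂ) (hX : ∀ j, X j ≠ 0) (hp : ∀ j k, |((X j) / (X k)).arg| ≤ θ) :
    Real.cos (θ/2) * ∑ j, ‖X j‖ ≤ ‖∑ j, X j‖ := by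
  have hπ := Real.pi_pos
  set j0 : Fin q := ⟨0, hq⟩ with hj0
  set a : Fin q → ℝ := fun j => ((X j) / (X j0)).arg with ha
  have hdiff : ∀ j k, |a j - a k| ≤ θ := by
    intro j k
    have h1 : (((X j / X k).arg : Real) : Real.Angle) = ((a j - a k : ℝ) : Real.Angle) := by
      have e1 : X j / X k = (X j / X j0) / (X k / X j0) := by
        rw [div_div_div_cancel_right₀]
        exact hX j0
      rw [e1, Complex.arg_div_coe_angle (div_ne_zero (hX j) (hX j0))
        (div_ne_zero (hX k) (hX j0)), Real.Angle.coe_sub]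
    obtain ⟨n, hn⟩ := Real.Angle.angle_eq_iff_two_pi_dvd_sub.mp h1
    have hj := hp j j0
    have hk := hp k j0
    have hjk := hp j k
    have hn0 : n = 0 := by
      apply int_zero_of_abs_lt
      rw [← hn]
      have h2 : |a j| ≤ θ := hj
      have h3 : |a k| ≤ θ := hk
      calc |(X j / X k).arg - (a j - a k)| ≤ |(X j / X k).arg| + |a j - a k| := abs_sub _ _
        _ ≤ θ + (|a j| + |a k|) := by
            gcongr
            exact abs_sub _ _
        _ ≤ 3 * θ := by linarith
        _ < 2 * Real.pi := by linarith
    rw [hn0] at hn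
    push_cast at hn
    have : (X j / X k).arg = a j - a k := by linarith
    rw [← this]
    exact hjk
  have hne : (Finset.univ : Finset (Fin q)).Nonempty := ⟨j0, mem_univ _⟩
  set M : ℝ := Finset.univ.sup' hne a with hM
  set L : ℝ := Finset.univ.inf' hne a with hL
  obtain ⟨jM, _, hjM⟩ := Finset.exists_mem_eq_sup' hne a
  obtain ⟨jL, _, hjL⟩ := Finset.exists_mem_eq_inf' hne a
  have hML : M - L ≤ θ := by
    rw [hM, hL, hjM, hjL]
    calc a jM - a jL ≤ |a jM - a jL| := le_abs_self _
      _ ≤ θ := hdiff _ _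
  set c : ℝ := (M + L) / 2 with hc
  have hcj : ∀ j, |a j - c| ≤ θ / 2 := by
    intro j
    have h1 : a j ≤ M := Finset.le_sup' a (mem_univ j)
    have h2 : L ≤ a j := Finset.inf'_le a (mem_univ j)
    rw [abs_le]
    constructor <;> simp only [hc] <;> linarith
  -- representation
  have hrep : ∀ j, X j = (‖X j‖ : ℂ) *
      Complex.exp ((((X j0).arg + a j : ℝ)) * Complex.I) := by
    intro j
    have e2 := Complex.norm_mul_exp_arg_mul_I (X j / X j0)
    have e3 := Complex.norm_mul_exp_arg_mul_I (X j0)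
    have hsj : (‖X j‖ : ℂ)
        = (‖X j / X j0‖ : ℂ) * (‖X j0‖ : ℂ) := by
      rw [norm_div]
      push_cast
      rw [div_mul_cancel₀]
      exact_mod_cast norm_ne_zero_iff.mpr (hX j0)
    have hexp : Complex.exp ((((X j0).arg + a j : ℝ)) * Complex.I)
        = Complex.exp ((a j : ℝ) * Complex.I) *
          Complex.exp ((((X j0).arg : ℝ)) * Complex.I) := by
      rw [← Complex.exp_add]
      congr 1
      push_cast
      ring
    symm
    calc (‖X j‖ : ℂ) * Complex.exp ((((X j0).arg + a j : ℝ)) * Complex.I)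
        = ((‖X j / X j0‖ : ℂ) * Complex.exp ((a j : ℝ) * Complex.I)) *
          ((‖X j0‖ : ℂ) * Complex.exp ((((X j0).arg : ℝ)) * Complex.I)) := by
          rw [hsj, hexp]; ring
      _ = (X j / X j0) * X j0 := by rw [e2, e3]
      _ = X j := div_mul_cancel₀ _ (hX j0)
  set ψ : ℝ := (X j0).arg + c with hψ
  have key : ∀ j, (Complex.exp ((-ψ : ℝ) * Complex.I) * X j).re
      = ‖X j‖ * Real.cos (a j - c) := by
    intro j
    conv_lhs => rw [hrep j]
    have harg : ((-ψ : ℝ) : ℂ) * Complex.I + (((X j0).arg + a j : ℝ) : ℂ) * Complex.I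
        = ((a j - c : ℝ) : ℂ) * Complex.I := by
      push_cast
      rw [hψ]
      push_cast
      ring
    have h2 : Complex.exp ((-ψ : ℝ) * Complex.I) *
        ((‖X j‖ : ℂ) * Complex.exp ((((X j0).arg + a j : ℝ)) * Complex.I))
        = (‖X j‖ : ℂ) * Complex.exp (((a j - c : ℝ)) * Complex.I) := by
      calc Complex.exp ((-ψ : ℝ) * Complex.I) *
          ((‖X j‖ : ℂ) * Complex.exp ((((X j0).arg + a j : ℝ)) * Complex.I))
          = (‖X j‖ : ℂ) * (Complex.exp ((-ψ : ℝ) * Complex.I) *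
            Complex.exp ((((X j0).arg + a j : ℝ)) * Complex.I)) := by ring
        _ = (‖X j‖ : ℂ) * Complex.exp (((-ψ : ℝ) : ℂ) * Complex.I
            + (((X j0).arg + a j : ℝ) : ℂ) * Complex.I) := by rw [Complex.exp_add]
        _ = (‖X j‖ : ℂ) * Complex.exp (((a j - c : ℝ)) * Complex.I) := by
            rw [harg]
    rw [h2, Complex.re_ofReal_mul, Complex.exp_ofReal_mul_I_re]
  have habs1 : ‖Complex.exp ((-ψ : ℝ) * Complex.I)‖ = 1 :=
    Complex.norm_exp_ofReal_mul_I _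
  calc Real.cos (θ/2) * ∑ j, ‖X j‖
      = ∑ j, ‖X j‖ * Real.cos (θ/2) := by
        rw [Finset.mul_sum]
        exact Finset.sum_congr rfl fun j _ => mul_comm _ _
    _ ≤ ∑ j, ‖X j‖ * Real.cos (a j - c) := by
        apply Finset.sum_le_sum
        intro j _
        apply mul_le_mul_of_nonneg_left _ (norm_nonneg _)
        rw [← Real.cos_abs (a j - c)]
        apply Real.cos_le_cos_of_nonneg_of_le_pi (abs_nonneg _) (by linarith) (hcj j)
    _ = ∑ j, (Complex.exp ((-ψ : ℝ) * Complex.I) * X j).re :=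
        Finset.sum_congr rfl fun j _ => (key j).symm
    _ = (Complex.exp ((-ψ : ℝ) * Complex.I) * ∑ j, X j).re := by
        rw [Finset.mul_sum, Complex.re_sum]
    _ ≤ ‖Complex.exp ((-ψ : ℝ) * Complex.I) * ∑ j, X j‖ := Complex.re_le_norm _
    _ = ‖∑ j, X j‖ := by rw [norm_mul, habs1, one_mul]



variable {m q : ℕ}

/-- The edge set of the graph, as ordered pairs. -/
def Edges (G : SimpleGraph (Fin m)) [DecidableRel G.Adj] : Finset (Fin m × Fin m) :=
  Finset.univ.filter (fun e : Fin m × Fin m => e.1 < e.2 ∧ G.Adj e.1 e.2)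

/-- Pinned partition function: vertices outside `F` are pinned to `φ`. -/
noncomputable def pf (G : SimpleGraph (Fin m)) [DecidableRel G.Adj]
    (W : Fin m × Fin m → Fin q → Fin q → ℂ) (F : Finset (Fin m)) (φ : Fin m → Fin q) : ℂ :=
  ∑ σ ∈ Finset.univ.filter (fun σ : Fin m → Fin q => ∀ v, v ∉ F → σ v = φ v),
    ∏ e ∈ Edges G, W e (σ e.1) (σ e.2)

/-- Freeze the `v`-coordinate of all edge weights at value `j`. -/
def freeze (v : Fin m) (j : Fin q) (W : Fin m × Fin m → Fin q → Fin q → ℂ) :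
    Fin m × Fin m → Fin q → Fin q → ℂ :=
  fun e => if e.1 = v then (fun _ b => W e j b)
    else if e.2 = v then (fun a _ => W e a j) else W e

/-- Replace the weight of the single edge `e₀`. -/
def updE (W : Fin m × Fin m → Fin q → Fin q → ℂ) (e₀ : Fin m × Fin m)
    (f : Fin q → Fin q → ℂ) : Fin m × Fin m → Fin q → Fin q → ℂ :=
  fun e => if e = e₀ then f else W e

/-- All weights within `δ` of `1`. -/
def Dsk (G : SimpleGraph (Fin m)) [DecidableRel G.Adj] (δ : ℝ)
    (W : Fin m × Fin m → Fin q → Fin q → ℂ) : Prop :=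
  ∀ e ∈ Edges G, ∀ a b, ‖W e a b - 1‖ < δ

variable {G : SimpleGraph (Fin m)} [DecidableRel G.Adj]

lemma dsk_freeze {δ : ℝ} {W : Fin m × Fin m → Fin q → Fin q → ℂ} (h : Dsk G δ W)
    (v : Fin m) (j : Fin q) : Dsk G δ (freeze v j W) := by
  intro e he a b
  unfold freeze
  split
  · exact h e he j b
  · split
    · exact h e he a j
    · exact h e he a b

lemma dsk_updE_one {δ : ℝ} {W : Fin m × Fin m → Fin q → Fin q → ℂ} (h : Dsk G δ W)
    (hδ : 0 < δ) (e₀ : Fin m × Fin m) : Dsk G δ (updE W e₀ (fun _ _ => 1)) := by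
  intro e he a b
  unfold updE
  split
  · simpa using hδ
  · exact h e he a b

lemma pf_congr {W W' : Fin m × Fin m → Fin q → Fin q → ℂ} {F φ}
    (h : ∀ e ∈ Edges G, W e = W' e) : pf G W F φ = pf G W' F φ :=
  Finset.sum_congr rfl fun σ _ => Finset.prod_congr rfl fun e he => by rw [h e he]

lemma pf_empty (W : Fin m × Fin m → Fin q → Fin q → ℂ) (φ : Fin m → Fin q) :
    pf G W ∅ φ = ∏ e ∈ Edges G, W e (φ e.1) (φ e.2) := by
  unfold pf
  have h1 : Finset.univ.filter
      (fun σ : Fin m → Fin q => ∀ v, v ∉ (∅ : Finset (Fin m)) → σ v = φ v) = {φ} := by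
    ext σ
    simp only [Finset.mem_filter, Finset.mem_univ, true_and, Finset.notMem_empty,
      not_false_iff, forall_true_left, Finset.mem_singleton]
    constructor
    · intro h; funext v; exact h v
    · intro h v; rw [h]
  rw [h1, Finset.sum_singleton]

/-- Splitting a free vertex: summing over its values, with frozen weights. -/
lemma pf_pin (W : Fin m × Fin m → Fin q → Fin q → ℂ) (F : Finset (Fin m))
    (φ : Fin m → Fin q) (v : Fin m) (hv : v ∈ F) :
    pf G W F φ = ∑ j : Fin q, pf G (freeze v j W) (F.erase v) φ := by
  unfold pf
  have h0 : (Finset.univ.filter (fun σ : Fin m → Fin q => ∀ u, u ∉ F → σ u = φ u))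
      = (Finset.univ.filter (fun σ : Fin m → Fin q => ∀ u, u ∉ F → σ u = φ u)).filter
        (fun σ => σ v ∈ (Finset.univ : Finset (Fin q))) := by
    ext σ
    simp [Finset.mem_filter]
  rw [h0, ← Finset.sum_fiberwise_eq_sum_filter]
  apply Finset.sum_congr rfl
  intro j _
  apply Finset.sum_nbij' (fun σ => Function.update σ v (φ v)) (fun σ => Function.update σ v j)
  · -- maps into target
    intro σ hσ
    rw [Finset.mem_filter] at hσ ⊢
    obtain ⟨hσ1, _⟩ := hσ
    rw [Finset.mem_filter] at hσ1
    refine ⟨mem_univ _, ?_⟩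
    intro u hu
    by_cases huv : u = v
    · subst huv; rw [Function.update_self]
    · rw [Function.update_of_ne huv]
      apply hσ1.2
      intro huF
      exact hu (Finset.mem_erase.mpr ⟨huv, huF⟩)
  · -- inverse maps back
    intro σ hσ
    rw [Finset.mem_filter] at hσ ⊢
    refine ⟨?_, by rw [Function.update_self]⟩
    rw [Finset.mem_filter]
    refine ⟨mem_univ _, ?_⟩
    intro u hu
    have huv : u ≠ v := fun h => hu (h ▸ hv)
    rw [Function.update_of_ne huv]
    exact hσ.2 u (fun h => hu (Finset.mem_of_mem_erase h))
  · -- left inverse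
    intro σ hσ
    rw [Finset.mem_filter] at hσ
    rw [Function.update_idem, ← hσ.2, Function.update_eq_self]
  · -- right inverse
    intro σ hσ
    rw [Finset.mem_filter] at hσ
    have : σ v = φ v := hσ.2 v (Finset.notMem_erase _ _)
    rw [Function.update_idem, ← this, Function.update_eq_self]
  · -- products agree
    intro σ hσ
    rw [Finset.mem_filter] at hσ
    have hσv : σ v = j := hσ.2
    apply Finset.prod_congr rfl
    intro e he
    rw [Edges, Finset.mem_filter] at he
    have hlt : e.1 < e.2 := he.2.1
    by_cases h1 : e.1 = v
    · have h2 : e.2 ≠ v := by rw [← h1]; exact (ne_of_lt hlt).symm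
      simp only [freeze, h1, if_pos rfl]
      rw [Function.update_of_ne h2, h1, hσv]
      simp
    · by_cases h2 : e.2 = v
      · simp only [freeze, h1, if_neg h1, h2, if_pos rfl]
        rw [Function.update_of_ne h1, h2, hσv]
        simp
      · simp only [freeze, if_neg h1, if_neg h2]
        rw [Function.update_of_ne h1, Function.update_of_ne h2]

/-- Factoring out an edge whose weight is constant on the summation set. -/
lemma pf_factor (W : Fin m × Fin m → Fin q → Fin q → ℂ) {F : Finset (Fin m)}
    {φ : Fin m → Fin q} {e₀ : Fin m × Fin m} (he : e₀ ∈ Edges G) (c : ℂ)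
    (hconst : ∀ σ : Fin m → Fin q, (∀ u, u ∉ F → σ u = φ u) →
      W e₀ (σ e₀.1) (σ e₀.2) = c) :
    pf G W F φ = c * pf G (updE W e₀ (fun _ _ => 1)) F φ := by
  unfold pf
  rw [Finset.mul_sum]
  apply Finset.sum_congr rfl
  intro σ hσ
  rw [Finset.mem_filter] at hσ
  rw [← Finset.mul_prod_erase _ (fun e => W e (σ e.1) (σ e.2)) he,
    ← Finset.mul_prod_erase _
    (fun e => updE W e₀ (fun _ _ => (1:ℂ)) e (σ e.1) (σ e.2)) he,
    hconst σ hσ.2]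
  have h2 : updE W e₀ (fun _ _ => (1:ℂ)) e₀ (σ e₀.1) (σ e₀.2) = 1 := by simp [updE]
  rw [h2, one_mul]
  congr 1
  apply Finset.prod_congr rfl
  intro e he'
  have hne : e ≠ e₀ := Finset.ne_of_mem_erase he'
  simp [updE, hne]


end Stmt16

namespace Stmt16

variable {m q : ℕ} {G : SimpleGraph (Fin m)} [DecidableRel G.Adj]

/-- Scalar step: the changed edge weight is constant on the summation set. -/
lemma scalar_step {δ B : ℝ} (hq : 0 < q) (hδ0 : 0 < δ) (hδ1 : δ < 1) (hδ34 : δ ≤ 3/4)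
    (hI1 : 2 * (δ / (1 - (4/9) * δ^2)) ≤ B) (hBπ : B < Real.pi)
    (F : Finset (Fin m))
    (hC1 : ∀ (W : Fin m × Fin m → Fin q → Fin q → ℂ) (φ : Fin m → Fin q),
      Dsk G δ W → pf G W F φ ≠ 0)
    {W W' : Fin m × Fin m → Fin q → Fin q → ℂ} (φ : Fin m → Fin q)
    {e₀ : Fin m × Fin m} (he₀ : e₀ ∈ Edges G) (hW : Dsk G δ W) (hW' : Dsk G δ W')
    (hagree : ∀ e ∈ Edges G, e ≠ e₀ → W e = W' e)
    (c c' : ℂ)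
    (hc : ∀ σ : Fin m → Fin q, (∀ u, u ∉ F → σ u = φ u) → W e₀ (σ e₀.1) (σ e₀.2) = c)
    (hc' : ∀ σ : Fin m → Fin q, (∀ u, u ∉ F → σ u = φ u) → W' e₀ (σ e₀.1) (σ e₀.2) = c')
    (hcδ : ‖c - 1‖ ≤ δ) (hc'δ : ‖c' - 1‖ ≤ δ) :
    pf G W F φ ≠ 0 ∧ pf G W' F φ ≠ 0 ∧ |(pf G W' F φ / pf G W F φ).arg| ≤ B := by
  have hzW : pf G W F φ ≠ 0 := hC1 W φ hW
  have hzW' : pf G W' F φ ≠ 0 := hC1 W' φ hW'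
  refine ⟨hzW, hzW', ?_⟩
  have hfac := pf_factor W he₀ c hc
  have hfac' := pf_factor W' he₀ c' hc'
  have hNeq : pf G (updE W' e₀ (fun _ _ => 1)) F φ = pf G (updE W e₀ (fun _ _ => 1)) F φ := by
    apply pf_congr
    intro e he
    by_cases h : e = e₀
    · subst h; simp [updE]
    · simp only [updE, if_neg h]
      exact (hagree e he h).symm
  have hN : pf G (updE W e₀ (fun _ _ => 1)) F φ ≠ 0 :=
    hC1 _ φ (dsk_updE_one hW hδ0 e₀)
  obtain ⟨hcne, hcarg⟩ := arg_near_one hcδ hδ34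
  obtain ⟨hc'ne, hc'arg⟩ := arg_near_one hc'δ hδ34
  have hratio : pf G W' F φ / pf G W F φ = c' / c := by
    rw [hfac, hfac', hNeq]
    rw [mul_div_mul_right _ _ hN]
  rw [hratio]
  have hd : (0:ℝ) < 1 - (4/9) * δ^2 := by nlinarith
  have hδd : 0 ≤ δ / (1 - (4/9)*δ^2) := by positivity
  have hsum : |c'.arg| + |c.arg| < Real.pi := by
    have := hcarg; have := hc'arg
    linarith
  calc |(c' / c).arg| ≤ |c'.arg| + |c.arg| := arg_div_le hc'ne hcne hsum
    _ ≤ 2 * (δ / (1 - (4/9)*δ^2)) := by linarith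
    _ ≤ B := hI1

/-- Telescoping: comparing partition functions of weights differing on at most
`k` edges, each difference being of "unary" form. -/
lemma cor {δ B θ : ℝ} (hB0 : 0 ≤ B) (hθπ : θ < Real.pi)
    (F : Finset (Fin m))
    (hC1 : ∀ (W : Fin m × Fin m → Fin q → Fin q → ℂ) (φ : Fin m → Fin q),
      Dsk G δ W → pf G W F φ ≠ 0)
    (hC2 : ∀ (W W' : Fin m × Fin m → Fin q → Fin q → ℂ) (φ : Fin m → Fin q)
      (e₀ : Fin m × Fin m), e₀ ∈ Edges G → Dsk G δ W → Dsk G δ W' →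
      (∀ e ∈ Edges G, e ≠ e₀ → W e = W' e) →
      ((∃ g g' : Fin q → ℂ, (∀ a b, W e₀ a b = g b) ∧ (∀ a b, W' e₀ a b = g' b)) ∨
       (∃ g g' : Fin q → ℂ, (∀ a b, W e₀ a b = g a) ∧ (∀ a b, W' e₀ a b = g' a))) →
      pf G W F φ ≠ 0 ∧ pf G W' F φ ≠ 0 ∧ |(pf G W' F φ / pf G W F φ).arg| ≤ B) :
    ∀ (k : ℕ) (W W' : Fin m × Fin m → Fin q → Fin q → ℂ) (φ : Fin m → Fin q)
      (D : Finset (Fin m × Fin m)),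
      Dsk G δ W → Dsk G δ W' → D.card ≤ k → B * k ≤ θ →
      (∀ e ∈ Edges G, e ∉ D → W e = W' e) →
      (∀ e ∈ Edges G, W e = W' e ∨
        (∃ g g' : Fin q → ℂ, (∀ a b, W e a b = g b) ∧ (∀ a b, W' e a b = g' b)) ∨
        (∃ g g' : Fin q → ℂ, (∀ a b, W e a b = g a) ∧ (∀ a b, W' e a b = g' a))) →
      |(pf G W' F φ / pf G W F φ).arg| ≤ B * k := by
  intro k
  induction k with
  | zero =>
    intro W W' φ D hW hW' hcard _ hD _
    have hD0 : D = ∅ := Finset.card_eq_zero.mp (Nat.le_zero.mp hcard)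
    subst hD0
    have hWW : pf G W F φ = pf G W' F φ :=
      pf_congr (fun e he => hD e he (notMem_empty e))
    rw [hWW, div_self (hC1 W' φ hW')]
    simp [Complex.arg_one]
  | succ k ih =>
    intro W W' φ D hW hW' hcard hBk hD hforms
    have hBk' : B * k ≤ θ := by
      push_cast at hBk ⊢
      nlinarith
    rcases D.eq_empty_or_nonempty with hD0 | ⟨e₀, he₀⟩
    · subst hD0
      have hWW : pf G W F φ = pf G W' F φ :=
        pf_congr (fun e he => hD e he (notMem_empty e))
      rw [hWW, div_self (hC1 W' φ hW')]
      simp only [Complex.arg_one, abs_zero]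
      positivity
    · have hcard' : (D.erase e₀).card ≤ k := by
        rw [Finset.card_erase_of_mem he₀]
        omega
      by_cases hchange : e₀ ∈ Edges G ∧ W e₀ ≠ W' e₀
      · set W'' : Fin m × Fin m → Fin q → Fin q → ℂ := updE W e₀ (W' e₀) with hW''def
        have hW''eq : W'' e₀ = W' e₀ := by simp [hW''def, updE]
        have hW''ne : ∀ e, e ≠ e₀ → W'' e = W e := by
          intro e he; simp [hW''def, updE, he]
        have hW''dsk : Dsk G δ W'' := by
          intro e he a b
          by_cases h : e = e₀
          · subst h; rw [hW''eq]; exact hW' e he a b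
          · rw [hW''ne e h]; exact hW e he a b
        have hforms₀ : (∃ g g' : Fin q → ℂ, (∀ a b, W e₀ a b = g b) ∧
              (∀ a b, W'' e₀ a b = g' b)) ∨
            (∃ g g' : Fin q → ℂ, (∀ a b, W e₀ a b = g a) ∧ (∀ a b, W'' e₀ a b = g' a)) := by
          rcases hforms e₀ hchange.1 with h | ⟨g, g', h1, h2⟩ | ⟨g, g', h1, h2⟩
          · exact absurd h hchange.2
          · exact Or.inl ⟨g, g', h1, fun a b => by rw [hW''eq]; exact h2 a b⟩
          · exact Or.inr ⟨g, g', h1, fun a b => by rw [hW''eq]; exact h2 a b⟩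
        obtain ⟨hz, hz'', harg1⟩ := hC2 W W'' φ e₀ hchange.1 hW hW''dsk
          (fun e _ he => (hW''ne e he).symm) hforms₀
        have harg2 : |(pf G W' F φ / pf G W'' F φ).arg| ≤ B * k := by
          apply ih W'' W' φ (D.erase e₀) hW''dsk hW' hcard' hBk'
          · intro e he heD
            by_cases h : e = e₀
            · subst h; rw [hW''eq]
            · rw [hW''ne e h]
              exact hD e he (fun hDe => heD (Finset.mem_erase.mpr ⟨h, hDe⟩))
          · intro e he
            by_cases h : e = e₀
            · subst h; rw [hW''eq]; exact Or.inl rfl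
            · rw [hW''ne e h]
              exact hforms e he
        have hz' : pf G W' F φ ≠ 0 := hC1 W' φ hW'
        have hkey : pf G W' F φ / pf G W F φ
            = (pf G W' F φ / pf G W'' F φ) * (pf G W'' F φ / pf G W F φ) := by
          field_simp
        rw [hkey]
        have hne1 : pf G W' F φ / pf G W'' F φ ≠ 0 := div_ne_zero hz' hz''
        have hne2 : pf G W'' F φ / pf G W F φ ≠ 0 := div_ne_zero hz'' hz
        have hsum : |(pf G W' F φ / pf G W'' F φ).arg| + |(pf G W'' F φ / pf G W F φ).arg|
            < Real.pi := by
          have h1 : B * k + B ≤ θ := by push_cast at hBk; nlinarith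
          linarith
        calc |((pf G W' F φ / pf G W'' F φ) * (pf G W'' F φ / pf G W F φ)).arg|
            ≤ |(pf G W' F φ / pf G W'' F φ).arg| + |(pf G W'' F φ / pf G W F φ).arg| := by
              rw [arg_mul_eq hne1 hne2 hsum]
              exact abs_add_le _ _
          _ ≤ B * k + B := by linarith
          _ = B * (k+1 : ℕ) := by push_cast; ring
      · -- no actual change at e₀
        have hnoch : ∀ e ∈ Edges G, e ∉ D.erase e₀ → W e = W' e := by
          intro e he heD
          by_cases h : e = e₀
          · subst h
            by_contra hne
            exact hchange ⟨he, hne⟩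
          · exact hD e he (fun hDe => heD (Finset.mem_erase.mpr ⟨h, hDe⟩))
        calc |(pf G W' F φ / pf G W F φ).arg|
            ≤ B * k := ih W W' φ (D.erase e₀) hW hW' hcard' hBk' hnoch hforms
          _ ≤ B * (k+1 : ℕ) := by push_cast; nlinarith

end Stmt16

namespace Stmt16

variable {m q : ℕ} {G : SimpleGraph (Fin m)} [DecidableRel G.Adj]


/-- Aggregation step: comparing `∑ g j * X j` with `∑ g' j * X j`. -/
lemma sum_step {δ B θ τ : ℝ} (hq : 0 < q) (hδ0 : 0 < δ) (hτ0 : 0 < τ)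
    (hθ0 : 0 ≤ θ) (hθ1 : θ < 2 * Real.pi / 3) (hτ : τ = Real.cos (θ/2))
    (hr34 : δ/τ ≤ 3/4) (hI2 : 2 * ((δ/τ) / (1 - (4/9) * (δ/τ)^2)) ≤ B)
    (hBπ : B < Real.pi)
    (X : Fin q → ℂ) (hXne : ∀ j, X j ≠ 0) (hXpair : ∀ j k, |(X j / X k).arg| ≤ θ)
    (g g' : Fin q → ℂ) (hgδ : ∀ j, ‖g j - 1‖ < δ)
    (hg'δ : ∀ j, ‖g' j - 1‖ < δ)
    {U U' : ℂ} (hU : U = ∑ j, g j * X j) (hU' : U' = ∑ j, g' j * X j) :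
    U ≠ 0 ∧ U' ≠ 0 ∧ |(U' / U).arg| ≤ B := by
  set T := ∑ j, X j with hT
  have htau : τ * ∑ j, ‖X j‖ ≤ ‖T‖ := by
    rw [hτ]; exact tau_lemma hq hθ0 hθ1 X hXne hXpair
  have hsumpos : 0 < ∑ j, ‖X j‖ := by
    apply Finset.sum_pos'
    · intro j _; exact norm_nonneg _
    · exact ⟨⟨0, hq⟩, mem_univ _, norm_pos_iff.mpr (hXne ⟨0, hq⟩)⟩
  have hTpos : 0 < ‖T‖ := by nlinarith
  have hTne : T ≠ 0 := norm_pos_iff.mp hTpos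
  have key : ∀ (h : Fin q → ℂ), (∀ j, ‖h j - 1‖ < δ) → ∀ {V : ℂ},
      V = ∑ j, h j * X j →
      V / T ≠ 0 ∧ |(V/T).arg| ≤ (δ/τ) / (1 - (4/9) * (δ/τ)^2) := by
    intro h hh V hV
    have hVT : ‖V - T‖ ≤ δ * ∑ j, ‖X j‖ := by
      have h1 : V - T = ∑ j, (h j - 1) * X j := by
        rw [hV, hT, ← Finset.sum_sub_distrib]
        exact Finset.sum_congr rfl fun j _ => by ring
      rw [h1]
      calc ‖∑ j, (h j - 1) * X j‖ ≤ ∑ j, ‖(h j - 1) * X j‖ :=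
          norm_sum_le _ _
        _ ≤ ∑ j, δ * ‖X j‖ := by
            apply Finset.sum_le_sum
            intro j _
            rw [norm_mul]
            exact mul_le_mul_of_nonneg_right (le_of_lt (hh j)) (norm_nonneg _)
        _ = δ * ∑ j, ‖X j‖ := by rw [Finset.mul_sum]
    have hdisk : ‖V / T - 1‖ ≤ δ/τ := by
      have h2 : V / T - 1 = (V - T) / T := by field_simp
      rw [h2, norm_div, div_le_div_iff₀ hTpos hτ0]
      calc ‖V - T‖ * τ ≤ (δ * ∑ j, ‖X j‖) * τ :=
            mul_le_mul_of_nonneg_right hVT (le_of_lt hτ0)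
        _ = δ * (τ * ∑ j, ‖X j‖) := by ring
        _ ≤ δ * ‖T‖ := mul_le_mul_of_nonneg_left htau (le_of_lt hδ0)
    exact arg_near_one hdisk hr34
  obtain ⟨hUTne, hUarg⟩ := key g hgδ hU
  obtain ⟨hU'Tne, hU'arg⟩ := key g' hg'δ hU'
  have hUne : U ≠ 0 := by
    intro h0; apply hUTne; rw [h0]; simp
  have hU'ne : U' ≠ 0 := by
    intro h0; apply hU'Tne; rw [h0]; simp
  refine ⟨hUne, hU'ne, ?_⟩
  have hdiv : U' / U = (U' / T) / (U / T) := by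
    rw [div_div_div_cancel_right₀]
    exact hTne
  rw [hdiv]
  have hsum : |(U'/T).arg| + |(U/T).arg| < Real.pi := by linarith
  calc |((U'/T)/(U/T)).arg| ≤ |(U'/T).arg| + |(U/T).arg| := arg_div_le hU'Tne hUTne hsum
    _ ≤ B := by linarith

/-- The main induction: non-vanishing together with the single-edge angle bound. -/
lemma main {δ B θ τ : ℝ} {Δ : ℕ}
    (hq : 0 < q)
    (hδ0 : 0 < δ) (hδ1 : δ < 1)
    (hθ0 : 0 ≤ θ) (hθ1 : θ < 2 * Real.pi / 3)
    (hτ : τ = Real.cos (θ/2)) (hτ0 : 0 < τ)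
    (hδ34 : δ ≤ 3/4) (hr34 : δ/τ ≤ 3/4)
    (hI1 : 2 * (δ / (1 - (4/9) * δ^2)) ≤ B)
    (hI2 : 2 * ((δ/τ) / (1 - (4/9) * (δ/τ)^2)) ≤ B)
    (hB0 : 0 ≤ B) (hBθ : B * (Δ:ℝ) ≤ θ) (hΔ1 : 1 ≤ Δ)
    (hdeg : ∀ v : Fin m, ((Edges G).filter (fun e => e.1 = v ∨ e.2 = v)).card ≤ Δ) :
    ∀ n : ℕ, ∀ F : Finset (Fin m), F.card ≤ n →
      (∀ (W : Fin m × Fin m → Fin q → Fin q → ℂ) (φ : Fin m → Fin q),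
        Dsk G δ W → pf G W F φ ≠ 0) ∧
      (∀ (W W' : Fin m × Fin m → Fin q → Fin q → ℂ) (φ : Fin m → Fin q)
        (e₀ : Fin m × Fin m), e₀ ∈ Edges G → Dsk G δ W → Dsk G δ W' →
        (∀ e ∈ Edges G, e ≠ e₀ → W e = W' e) →
        ((∃ g g' : Fin q → ℂ, (∀ a b, W e₀ a b = g b) ∧ (∀ a b, W' e₀ a b = g' b)) ∨
         (∃ g g' : Fin q → ℂ, (∀ a b, W e₀ a b = g a) ∧ (∀ a b, W' e₀ a b = g' a))) →
        pf G W F φ ≠ 0 ∧ pf G W' F φ ≠ 0 ∧ |(pf G W' F φ / pf G W F φ).arg| ≤ B) := by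
  have hπ := Real.pi_pos
  have hθπ : θ < Real.pi := by linarith
  have hBπ : B < Real.pi := by
    have h1 : B * 1 ≤ B * (Δ:ℝ) := by
      apply mul_le_mul_of_nonneg_left _ hB0
      exact_mod_cast hΔ1
    linarith [hBθ]
  -- generic non-vanishing at the empty pinning
  have hempty : ∀ (W : Fin m × Fin m → Fin q → Fin q → ℂ) (φ : Fin m → Fin q),
      Dsk G δ W → pf G W (∅ : Finset (Fin m)) φ ≠ 0 := by
    intro W φ hW
    rw [pf_empty]
    apply Finset.prod_ne_zero_iff.mpr
    intro e he h0
    have h1 := hW e he (φ e.1) (φ e.2)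
    rw [h0] at h1
    simp only [zero_sub, norm_neg, norm_one] at h1
    linarith
  intro n
  induction n with
  | zero =>
    intro F hF
    have hF0 : F = ∅ := Finset.card_eq_zero.mp (Nat.le_zero.mp hF)
    subst hF0
    refine ⟨hempty, ?_⟩
    intro W W' φ e₀ he₀ hW hW' hagree hform
    have ha0 : Fin q := ⟨0, hq⟩
    rcases hform with ⟨g, g', hg, hg'⟩ | ⟨g, g', hg, hg'⟩
    · -- weights depend only on the second coordinate; e₀.2 is pinned (F = ∅)
      apply scalar_step hq hδ0 hδ1 hδ34 hI1 hBπ ∅ hempty φ he₀ hW hW' hagree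
        (g (φ e₀.2)) (g' (φ e₀.2))
      · intro σ hσ
        rw [hg, hσ e₀.2 (notMem_empty _)]
      · intro σ hσ
        rw [hg', hσ e₀.2 (notMem_empty _)]
      · have := hW e₀ he₀ ha0 (φ e₀.2); rw [hg] at this; exact le_of_lt this
      · have := hW' e₀ he₀ ha0 (φ e₀.2); rw [hg'] at this; exact le_of_lt this
    · apply scalar_step hq hδ0 hδ1 hδ34 hI1 hBπ ∅ hempty φ he₀ hW hW' hagree
        (g (φ e₀.1)) (g' (φ e₀.1))
      · intro σ hσ
        rw [hg, hσ e₀.1 (notMem_empty _)]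
      · intro σ hσ
        rw [hg', hσ e₀.1 (notMem_empty _)]
      · have := hW e₀ he₀ (φ e₀.1) ha0; rw [hg] at this; exact le_of_lt this
      · have := hW' e₀ he₀ (φ e₀.1) ha0; rw [hg'] at this; exact le_of_lt this
  | succ n IH =>
    intro F hF
    by_cases hFn : F.card ≤ n
    · exact IH F hFn
    · push_neg at hFn
      have hFne : F.Nonempty := Finset.card_pos.mp (by omega)
      -- the freezing comparison: pairwise angles of the frozen partition functions
      have hpair_gen : ∀ (v : Fin m), v ∈ F →
          ∀ (Wf : Fin q → Fin m × Fin m → Fin q → Fin q → ℂ),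
          (∀ j, Dsk G δ (Wf j)) →
          (∀ j k, ∀ e ∈ Edges G, Wf j e = Wf k e ∨
            (∃ g g' : Fin q → ℂ, (∀ a b, Wf k e a b = g b) ∧ (∀ a b, Wf j e a b = g' b)) ∨
            (∃ g g' : Fin q → ℂ, (∀ a b, Wf k e a b = g a) ∧ (∀ a b, Wf j e a b = g' a))) →
          (∀ j k, ∀ e ∈ Edges G, e ∉ (Edges G).filter (fun e => e.1 = v ∨ e.2 = v) →
            Wf k e = Wf j e) →
          ∀ (φ : Fin m → Fin q) (j k : Fin q),
            |(pf G (Wf j) (F.erase v) φ / pf G (Wf k) (F.erase v) φ).arg| ≤ θ := by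
        intro v hv Wf hdsk hforms hoff φ j k
        have hcard : (F.erase v).card ≤ n := by
          rw [Finset.card_erase_of_mem hv]; omega
        obtain ⟨hC1e, hC2e⟩ := IH (F.erase v) hcard
        have h1 := cor hB0 hθπ (F.erase v) hC1e hC2e Δ (Wf k) (Wf j) φ
          ((Edges G).filter (fun e => e.1 = v ∨ e.2 = v)) (hdsk k) (hdsk j)
          (hdeg v) hBθ (hoff j k) (fun e he => by
            rcases hforms j k e he with h | h | h
            · exact Or.inl h.symm
            · exact Or.inr (Or.inl h)
            · exact Or.inr (Or.inr h))
        exact le_trans h1 hBθ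
      -- C1 at this level
      have hC1F : ∀ (W : Fin m × Fin m → Fin q → Fin q → ℂ) (φ : Fin m → Fin q),
          Dsk G δ W → pf G W F φ ≠ 0 := by
        intro W φ hW
        obtain ⟨v, hv⟩ := hFne
        rw [pf_pin W F φ v hv]
        have hcard : (F.erase v).card ≤ n := by
          rw [Finset.card_erase_of_mem hv]; omega
        obtain ⟨hC1e, _⟩ := IH (F.erase v) hcard
        set X : Fin q → ℂ := fun j => pf G (freeze v j W) (F.erase v) φ with hX
        have hXne : ∀ j, X j ≠ 0 := fun j => hC1e (freeze v j W) φ (dsk_freeze hW v j)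
        have hXpair : ∀ j k, |(X j / X k).arg| ≤ θ := by
          apply hpair_gen v hv (fun j => freeze v j W) (fun j => dsk_freeze hW v j)
          · intro j k e he
            by_cases h1 : e.1 = v
            · refine Or.inr (Or.inl ⟨fun b => W e k b, fun b => W e j b, ?_, ?_⟩) <;>
                (intro a b; simp [freeze, h1])
            · by_cases h2 : e.2 = v
              · refine Or.inr (Or.inr ⟨fun a => W e a k, fun a => W e a j, ?_, ?_⟩) <;>
                  (intro a b; simp [freeze, h1, h2])
              · exact Or.inl (by simp [freeze, h1, h2])
          · intro j k e he heD
            have h12 : ¬(e.1 = v ∨ e.2 = v) := by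
              intro h
              exact heD (Finset.mem_filter.mpr ⟨he, h⟩)
            push_neg at h12
            simp [freeze, h12.1, h12.2]
        have htau := tau_lemma hq hθ0 hθ1 X hXne hXpair
        have hsumpos : 0 < ∑ j, ‖X j‖ := by
          apply Finset.sum_pos'
          · intro j _; exact norm_nonneg _
          · exact ⟨⟨0, hq⟩, mem_univ _, norm_pos_iff.mpr (hXne ⟨0, hq⟩)⟩
        have hτpos : 0 < Real.cos (θ/2) := by rw [← hτ]; exact hτ0
        have habs : 0 < ‖∑ j, X j‖ := by nlinarith
        exact norm_pos_iff.mp habs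
      refine ⟨hC1F, ?_⟩
      intro W W' φ e₀ he₀ hW hW' hagree hform
      rcases hform with ⟨g, g', hg, hg'⟩ | ⟨g, g', hg, hg'⟩
      · -- weights at e₀ depend only on the second coordinate; relevant vertex is e₀.2
        by_cases hy : e₀.2 ∈ F
        · -- free case
          have hne12 : e₀.1 ≠ e₀.2 := by
            rw [Edges, Finset.mem_filter] at he₀
            exact ne_of_lt he₀.2.1
          have hcard : (F.erase e₀.2).card ≤ n := by
            rw [Finset.card_erase_of_mem hy]; omega
          obtain ⟨hC1e, hC2e⟩ := IH (F.erase e₀.2) hcard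
          set Wj : Fin q → Fin m × Fin m → Fin q → Fin q → ℂ :=
            fun j => updE (freeze e₀.2 j W) e₀ (fun _ _ => (1:ℂ)) with hWjdef
          set X : Fin q → ℂ := fun j => pf G (Wj j) (F.erase e₀.2) φ with hXdef
          have hWjdsk : ∀ j, Dsk G δ (Wj j) :=
            fun j => dsk_updE_one (dsk_freeze hW e₀.2 j) hδ0 e₀
          have hXne : ∀ j, X j ≠ 0 := fun j => hC1e (Wj j) φ (hWjdsk j)
          have hfacW : ∀ j, pf G (freeze e₀.2 j W) (F.erase e₀.2) φ = g j * X j := by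
            intro j
            apply pf_factor (freeze e₀.2 j W) he₀ (g j)
            intro σ _
            simp only [freeze, if_neg hne12, if_pos rfl]
            exact hg _ j
          have hfacW' : ∀ j, pf G (freeze e₀.2 j W') (F.erase e₀.2) φ = g' j * X j := by
            intro j
            have h1 : pf G (freeze e₀.2 j W') (F.erase e₀.2) φ
                = g' j * pf G (updE (freeze e₀.2 j W') e₀ (fun _ _ => 1)) (F.erase e₀.2) φ := by
              apply pf_factor (freeze e₀.2 j W') he₀ (g' j)
              intro σ _
              simp only [freeze, if_neg hne12, if_pos rfl]
              exact hg' _ j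
            rw [h1]
            congr 1
            apply pf_congr
            intro e he
            by_cases h : e = e₀
            · subst h; simp [hWjdef, updE]
            · have hWe := hagree e he h
              simp only [hWjdef, updE, if_neg h, freeze]
              rw [← hWe]
          have hXpair : ∀ j k, |(X j / X k).arg| ≤ θ := by
            apply hpair_gen e₀.2 hy Wj hWjdsk
            · intro j k e he
              by_cases h : e = e₀
              · subst h; exact Or.inl (by simp [hWjdef, updE])
              · by_cases h1 : e.1 = e₀.2
                · refine Or.inr (Or.inl ⟨fun b => W e k b, fun b => W e j b, ?_, ?_⟩) <;>
                    (intro a b; simp [hWjdef, updE, h, freeze, h1])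
                · by_cases h2 : e.2 = e₀.2
                  · refine Or.inr (Or.inr ⟨fun a => W e a k, fun a => W e a j, ?_, ?_⟩) <;>
                      (intro a b; simp [hWjdef, updE, h, freeze, h1, h2])
                  · exact Or.inl (by simp [hWjdef, updE, h, freeze, h1, h2])
            · intro j k e he heD
              have h12 : ¬(e.1 = e₀.2 ∨ e.2 = e₀.2) := fun hh =>
                heD (Finset.mem_filter.mpr ⟨he, hh⟩)
              push_neg at h12
              have hne₀ : e ≠ e₀ := by
                intro hh; rw [hh] at h12; exact h12.2 rfl
              simp [hWjdef, updE, hne₀, freeze, h12.1, h12.2]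
          have hzW : pf G W F φ = ∑ j, g j * X j := by
            rw [pf_pin W F φ e₀.2 hy]
            exact Finset.sum_congr rfl fun j _ => hfacW j
          have hzW' : pf G W' F φ = ∑ j, g' j * X j := by
            rw [pf_pin W' F φ e₀.2 hy]
            exact Finset.sum_congr rfl fun j _ => hfacW' j
          have hgδ : ∀ j, ‖g j - 1‖ < δ := by
            intro j
            have := hW e₀ he₀ ⟨0, hq⟩ j
            rwa [hg] at this
          have hg'δ : ∀ j, ‖g' j - 1‖ < δ := by
            intro j
            have := hW' e₀ he₀ ⟨0, hq⟩ j
            rwa [hg'] at this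
          exact sum_step hq hδ0 hτ0 hθ0 hθ1 hτ hr34 hI2 hBπ X hXne hXpair g g' hgδ hg'δ
            hzW hzW'
        · apply scalar_step hq hδ0 hδ1 hδ34 hI1 hBπ F hC1F φ he₀ hW hW' hagree
            (g (φ e₀.2)) (g' (φ e₀.2))
          · intro σ hσ; rw [hg, hσ e₀.2 hy]
          · intro σ hσ; rw [hg', hσ e₀.2 hy]
          · have := hW e₀ he₀ ⟨0,hq⟩ (φ e₀.2); rw [hg] at this; exact le_of_lt this
          · have := hW' e₀ he₀ ⟨0,hq⟩ (φ e₀.2); rw [hg'] at this; exact le_of_lt this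
      · -- weights at e₀ depend only on the first coordinate; relevant vertex is e₀.1
        by_cases hy : e₀.1 ∈ F
        · have hne12 : e₀.1 ≠ e₀.2 := by
            rw [Edges, Finset.mem_filter] at he₀
            exact ne_of_lt he₀.2.1
          have hcard : (F.erase e₀.1).card ≤ n := by
            rw [Finset.card_erase_of_mem hy]; omega
          obtain ⟨hC1e, hC2e⟩ := IH (F.erase e₀.1) hcard
          set Wj : Fin q → Fin m × Fin m → Fin q → Fin q → ℂ :=
            fun j => updE (freeze e₀.1 j W) e₀ (fun _ _ => (1:ℂ)) with hWjdef
          set X : Fin q → ℂ := fun j => pf G (Wj j) (F.erase e₀.1) φ with hXdef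
          have hWjdsk : ∀ j, Dsk G δ (Wj j) :=
            fun j => dsk_updE_one (dsk_freeze hW e₀.1 j) hδ0 e₀
          have hXne : ∀ j, X j ≠ 0 := fun j => hC1e (Wj j) φ (hWjdsk j)
          have hfacW : ∀ j, pf G (freeze e₀.1 j W) (F.erase e₀.1) φ = g j * X j := by
            intro j
            apply pf_factor (freeze e₀.1 j W) he₀ (g j)
            intro σ _
            simp only [freeze, if_pos rfl]
            exact hg j _
          have hfacW' : ∀ j, pf G (freeze e₀.1 j W') (F.erase e₀.1) φ = g' j * X j := by
            intro j
            have h1 : pf G (freeze e₀.1 j W') (F.erase e₀.1) φ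
                = g' j * pf G (updE (freeze e₀.1 j W') e₀ (fun _ _ => 1)) (F.erase e₀.1) φ := by
              apply pf_factor (freeze e₀.1 j W') he₀ (g' j)
              intro σ _
              simp only [freeze, if_pos rfl]
              exact hg' j _
            rw [h1]
            congr 1
            apply pf_congr
            intro e he
            by_cases h : e = e₀
            · subst h; simp [hWjdef, updE]
            · have hWe := hagree e he h
              simp only [hWjdef, updE, if_neg h, freeze]
              rw [← hWe]
          have hXpair : ∀ j k, |(X j / X k).arg| ≤ θ := by
            apply hpair_gen e₀.1 hy Wj hWjdsk
            · intro j k e he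
              by_cases h : e = e₀
              · subst h; exact Or.inl (by simp [hWjdef, updE])
              · by_cases h1 : e.1 = e₀.1
                · refine Or.inr (Or.inl ⟨fun b => W e k b, fun b => W e j b, ?_, ?_⟩) <;>
                    (intro a b; simp [hWjdef, updE, h, freeze, h1])
                · by_cases h2 : e.2 = e₀.1
                  · refine Or.inr (Or.inr ⟨fun a => W e a k, fun a => W e a j, ?_, ?_⟩) <;>
                      (intro a b; simp [hWjdef, updE, h, freeze, h1, h2])
                  · exact Or.inl (by simp [hWjdef, updE, h, freeze, h1, h2])
            · intro j k e he heD
              have h12 : ¬(e.1 = e₀.1 ∨ e.2 = e₀.1) := fun hh =>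
                heD (Finset.mem_filter.mpr ⟨he, hh⟩)
              push_neg at h12
              have hne₀ : e ≠ e₀ := by
                intro hh; rw [hh] at h12; exact h12.1 rfl
              simp [hWjdef, updE, hne₀, freeze, h12.1, h12.2]
          have hzW : pf G W F φ = ∑ j, g j * X j := by
            rw [pf_pin W F φ e₀.1 hy]
            exact Finset.sum_congr rfl fun j _ => hfacW j
          have hzW' : pf G W' F φ = ∑ j, g' j * X j := by
            rw [pf_pin W' F φ e₀.1 hy]
            exact Finset.sum_congr rfl fun j _ => hfacW' j
          have hgδ : ∀ j, ‖g j - 1‖ < δ := by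
            intro j
            have := hW e₀ he₀ j ⟨0, hq⟩
            rwa [hg] at this
          have hg'δ : ∀ j, ‖g' j - 1‖ < δ := by
            intro j
            have := hW' e₀ he₀ j ⟨0, hq⟩
            rwa [hg'] at this
          exact sum_step hq hδ0 hτ0 hθ0 hθ1 hτ hr34 hI2 hBπ X hXne hXpair g g' hgδ hg'δ
            hzW hzW'
        · apply scalar_step hq hδ0 hδ1 hδ34 hI1 hBπ F hC1F φ he₀ hW hW' hagree
            (g (φ e₀.1)) (g' (φ e₀.1))
          · intro σ hσ; rw [hg, hσ e₀.1 hy]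
          · intro σ hσ; rw [hg', hσ e₀.1 hy]
          · have := hW e₀ he₀ (φ e₀.1) ⟨0,hq⟩; rw [hg] at this; exact le_of_lt this
          · have := hW' e₀ he₀ (φ e₀.1) ⟨0,hq⟩; rw [hg'] at this; exact le_of_lt this

end Stmt16

/-- Zero-freeness for weighted graph homomorphism partition functions with
pinnings, when all edge weights are within `δ` of 1. -/
theorem stmt16 (m : ℕ) (G : SimpleGraph (Fin m)) [DecidableRel G.Adj]
    (Δ q : ℕ) (hq : 2 ≤ q) (hΔ : ∀ v, G.degree v ≤ Δ)
    (A : Fin m → Fin m → Fin q → Fin q → ℂ)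
    (θ τ δ : ℝ) (hθ0 : 0 < θ) (hθ1 : θ < 2 * Real.pi / 3)
    (hτ : τ = Real.cos (θ / 2))
    (hδ : δ = (θ * τ / (2 * Δ)) / (1 + θ * τ / (2 * Δ)))
    (hθδ : θ = 2 * δ * Δ / (τ * (1 - δ)))
    (hA : ∀ u v, G.Adj u v → ∀ j k, ‖A u v j k - 1‖ < δ)
    (S : Finset (Fin m)) (φ : Fin m → Fin q) :
    ∑ σ ∈ Finset.univ.filter (fun σ : Fin m → Fin q => ∀ v ∈ S, σ v = φ v),
      ∏ e ∈ Finset.univ.filter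
        (fun e : Fin m × Fin m => e.1 < e.2 ∧ G.Adj e.1 e.2),
        A e.1 e.2 (σ e.1) (σ e.2) ≠ 0 := by
  have hπ3 : (3:ℝ) < Real.pi := Real.pi_gt_three
  have hπ15 : Real.pi < 3.15 := Real.pi_lt_d2
  have hπ0 : (0:ℝ) < Real.pi := by linarith
  have hq0 : 0 < q := by omega
  have hτ1 : τ ≤ 1 := by rw [hτ]; exact Real.cos_le_one _
  have hτhalf : 1/2 ≤ τ := by
    rw [hτ, ← Real.cos_pi_div_three]
    apply Real.cos_le_cos_of_nonneg_of_le_pi (by linarith) (by linarith) (by linarith)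
  have hτ0 : 0 < τ := by linarith
  have hΔ1 : 1 ≤ Δ := by
    rcases Nat.eq_zero_or_pos Δ with h0 | h
    swap
    · exact h
    exfalso
    rw [h0] at hδ hθδ
    push_cast at hδ hθδ
    norm_num at hδ hθδ
    linarith
  have hΔR : (1:ℝ) ≤ (Δ:ℝ) := by exact_mod_cast hΔ1
  have hΔ0 : (0:ℝ) < (Δ:ℝ) := by linarith
  have hΔne : ((Δ:ℕ):ℝ) ≠ 0 := ne_of_gt hΔ0
  set x : ℝ := θ * τ / (2 * (Δ:ℝ)) with hxdef
  have hx0 : 0 < x := by rw [hxdef]; positivity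
  have h1x : (0:ℝ) < 1 + x := by linarith
  have hδx : δ = x / (1 + x) := hδ
  have hxeq : x * (2 * (Δ:ℝ)) = θ * τ := by rw [hxdef]; field_simp
  have hδeq : δ * (1 + x) = x := by rw [hδx]; field_simp
  have hxθ2 : x ≤ θ / 2 := by
    nlinarith [hxeq, mul_le_mul_of_nonneg_left hτ1 (le_of_lt hθ0),
      mul_le_mul_of_nonneg_left hΔR (by linarith : (0:ℝ) ≤ 2*x)]
  have hxπ : x < Real.pi / 3 := by linarith
  have hδ0 : 0 < δ := by rw [hδx]; positivity
  have hδ52 : δ ≤ 0.52 := by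
    rw [hδx, div_le_iff₀ h1x]
    nlinarith
  have hδ1 : δ < 1 := by linarith
  have hδ34 : δ ≤ 3/4 := by linarith
  have hr34 : δ/τ ≤ 3/4 := by
    rw [div_le_iff₀ hτ0]
    have key : 4*θ ≤ 6*(Δ:ℝ) + 3*θ*τ := by nlinarith
    have h4x : 4*x ≤ 3*τ*(1+x) := by
      nlinarith [hxeq, mul_le_mul_of_nonneg_left key (le_of_lt hτ0)]
    nlinarith [hδeq, h1x]
  have hkey : (4/9)*δ ≤ τ^2 := by
    nlinarith [mul_le_mul hτhalf hτhalf (by norm_num) (by linarith)]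
  set B : ℝ := θ / (Δ:ℝ) with hBdef
  have hτδ0 : 0 < τ * (1 - δ) := by nlinarith
  have hBeq : B = 2*δ/(τ*(1-δ)) := by
    rw [hBdef, hθδ]
    field_simp
  have hB0 : 0 ≤ B := by rw [hBdef]; positivity
  have hBΔ : B * (Δ:ℝ) ≤ θ := by
    rw [hBdef, div_mul_cancel₀ _ hΔne]
  have hI1 : 2 * (δ / (1 - (4/9) * δ^2)) ≤ B := by
    rw [hBeq]
    have hd1 : (0:ℝ) < 1 - (4/9)*δ^2 := by nlinarith
    have h2 : τ*(1-δ) ≤ 1 - (4/9)*δ^2 := by nlinarith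
    calc 2 * (δ / (1 - (4/9)*δ^2)) = (2*δ) / (1 - (4/9)*δ^2) := by ring
      _ ≤ (2*δ)/(τ*(1-δ)) := by
          apply div_le_div_of_nonneg_left (by linarith) hτδ0 h2
      _ = 2*δ/(τ*(1-δ)) := by ring
  have hI2 : 2 * ((δ/τ) / (1 - (4/9) * (δ/τ)^2)) ≤ B := by
    rw [hBeq]
    have h49 : (4/9)*(δ/τ)^2 ≤ δ := by
      rw [div_pow]
      rw [show (4:ℝ)/9 * (δ^2/τ^2) = ((4/9)*δ^2)/τ^2 by ring,
        div_le_iff₀ (pow_pos hτ0 2)]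
      nlinarith [hkey, hδ0]
    have hd2 : (0:ℝ) < 1 - (4/9)*(δ/τ)^2 := by nlinarith
    calc 2*((δ/τ)/(1-(4/9)*(δ/τ)^2)) = (2*(δ/τ))/(1-(4/9)*(δ/τ)^2) := by ring
      _ ≤ (2*(δ/τ))/(1-δ) := by
          apply div_le_div_of_nonneg_left (by positivity) (by linarith) (by linarith)
      _ = 2*δ/(τ*(1-δ)) := by
          field_simp
  have hdeg : ∀ v : Fin m,
      ((Stmt16.Edges G).filter (fun e => e.1 = v ∨ e.2 = v)).card ≤ Δ := by
    intro v
    have h1 : ((Stmt16.Edges G).filter (fun e => e.1 = v ∨ e.2 = v)).card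
        ≤ (G.neighborFinset v).card := by
      apply Finset.card_le_card_of_injOn (fun e => if e.1 = v then e.2 else e.1)
      · intro e he
        simp only [Finset.mem_coe] at he ⊢
        rw [Finset.mem_filter, Stmt16.Edges, Finset.mem_filter] at he
        obtain ⟨⟨_, hlt, hadj⟩, hor⟩ := he
        by_cases h1 : e.1 = v
        · rw [if_pos h1, SimpleGraph.mem_neighborFinset, ← h1]
          exact hadj
        · rw [if_neg h1, SimpleGraph.mem_neighborFinset,
            ← hor.resolve_left h1]
          exact hadj.symm
      · intro e he e' he' heq
        simp only [Finset.coe_filter, Set.mem_setOf_eq, Finset.mem_filter,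
          Stmt16.Edges, Finset.mem_univ, true_and] at he he'
        obtain ⟨⟨hlt, _⟩, hor⟩ := he
        obtain ⟨⟨hlt', _⟩, hor'⟩ := he'
        simp only at heq
        by_cases h1 : e.1 = v <;> by_cases h1' : e'.1 = v
        · rw [if_pos h1, if_pos h1'] at heq
          exact Prod.ext (h1.trans h1'.symm) heq
        · rw [if_pos h1, if_neg h1'] at heq
          exfalso
          have h2' : e'.2 = v := hor'.resolve_left h1'
          have hv1 : v < e.2 := h1 ▸ hlt
          have hv2 : e'.1 < v := h2' ▸ hlt'
          rw [heq] at hv1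
          exact absurd (hv1.trans hv2) (lt_irrefl v)
        · rw [if_neg h1, if_pos h1'] at heq
          exfalso
          have h2 : e.2 = v := hor.resolve_left h1
          have hv1 : v < e'.2 := h1' ▸ hlt'
          have hv2 : e.1 < v := h2 ▸ hlt
          rw [← heq] at hv1
          exact absurd (hv1.trans hv2) (lt_irrefl v)
        · rw [if_neg h1, if_neg h1'] at heq
          have h2 : e.2 = v := hor.resolve_left h1
          have h2' : e'.2 = v := hor'.resolve_left h1'
          exact Prod.ext heq (h2.trans h2'.symm)
    calc ((Stmt16.Edges G).filter (fun e => e.1 = v ∨ e.2 = v)).card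
        ≤ (G.neighborFinset v).card := h1
      _ = G.degree v := rfl
      _ ≤ Δ := hΔ v
  have hdsk : Stmt16.Dsk G δ (fun e : Fin m × Fin m => A e.1 e.2) := by
    intro e he a b
    rw [Stmt16.Edges, Finset.mem_filter] at he
    exact hA e.1 e.2 he.2.2 a b
  obtain ⟨hC1, _⟩ := Stmt16.main (G := G) hq0 hδ0 hδ1 (le_of_lt hθ0) hθ1 hτ hτ0
    hδ34 hr34 hI1 hI2 hB0 hBΔ hΔ1 hdeg (Sᶜ).card (Sᶜ) le_rfl
  have hgoal := hC1 (fun e : Fin m × Fin m => A e.1 e.2) φ hdsk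
  have hset : (Finset.univ.filter (fun σ : Fin m → Fin q => ∀ v ∈ S, σ v = φ v))
      = (Finset.univ.filter
          (fun σ : Fin m → Fin q => ∀ v, v ∉ Sᶜ → σ v = φ v)) := by
    ext σ
    simp [Finset.mem_compl]
  rw [hset]
  exact hgoal
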